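/- arXiv:1608.07788 — 2 statements merged into one kernel-verified Lean document; each statement's English description precedes it below -/
import Mathlib

section
/- Let H : E → ℝ be smooth and U ⊆ E an open set on which the elementary action ρ(x) = Σⱼ pⱼ ∂H/∂pⱼ(x) − H(x) is nonzero. If ζ and ζ' are smooth vector fields on U with L_ζ α_H = 0, L_{ζ'} α_H = 0, and α_H(x)(ζ(x)) = α_H(x)(ζ'(x)) for all x ∈ U, then ζ = ζ' on U. (The Noether symmetry associated to a given Noether integral is unique where ρ ≠ 0.) -/
noncomputable section
open scoped ContDiff

/-- The extended phase space `E = ℝ × ℝⁿ × ℝⁿ`, with points `x = (t, q, p)`. -/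
abbrev EE (n : ℕ) : Type := ℝ × (Fin n → ℝ) × (Fin n → ℝ)

/-- The Poincaré–Cartan 1-form `α_H = p dq − H dt`:
`α_H(x)(τ̂, ξ̂, η̂) = ∑ i, pᵢ ξ̂ᵢ − H(x) τ̂`. -/
def pcForm {n : ℕ} (H : EE n → ℝ) (x : EE n) : EE n →L[ℝ] ℝ :=
  (∑ i, x.2.2 i • ((ContinuousLinearMap.proj i).comp
      ((ContinuousLinearMap.fst ℝ (Fin n → ℝ) (Fin n → ℝ)).comp
        (ContinuousLinearMap.snd ℝ ℝ ((Fin n → ℝ) × (Fin n → ℝ))))))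
    - H x • ContinuousLinearMap.fst ℝ ℝ ((Fin n → ℝ) × (Fin n → ℝ))

/-- The vector field `Z_H(x) = (1, ∂H/∂p(x), −∂H/∂q(x))` of Hamilton's equations. -/
def ZH {n : ℕ} (H : EE n → ℝ) (x : EE n) : EE n :=
  (1, fun i => fderiv ℝ H x (0, 0, Pi.single i 1),
      fun i => - fderiv ℝ H x (0, Pi.single i 1, 0))

/-- The Lie derivative of a 1-form `α` along a vector field `ζ`:
`(L_ζ α)(x)(v) = (Dα(x)(ζ(x)))(v) + α(x)(Dζ(x)(v))`. -/
def lieDeriv {n : ℕ} (ζ : EE n → EE n) (α : EE n → (EE n →L[ℝ] ℝ)) (x : EE n) :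
    EE n →L[ℝ] ℝ :=
  fderiv ℝ α x (ζ x) + (α x).comp (fderiv ℝ ζ x)

/-- The exterior derivative of a 1-form:
`dα(x)(u,v) = (Dα(x)u)(v) − (Dα(x)v)(u)`. -/
def extDerivEE {n : ℕ} (α : EE n → (EE n →L[ℝ] ℝ)) (x u v : EE n) : ℝ :=
  fderiv ℝ α x u v - fderiv ℝ α x v u

/-- The elementary action `ρ(x) = ∑ⱼ pⱼ ∂H/∂pⱼ(x) − H(x)`. -/
def elemAction {n : ℕ} (H : EE n → ℝ) (x : EE n) : ℝ :=
  (∑ j, x.2.2 j * fderiv ℝ H x (0, 0, Pi.single j 1)) - H x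

namespace NoetherAux

variable {n : ℕ}

def L0 (n : ℕ) : EE n →L[ℝ] ℝ := ContinuousLinearMap.fst ℝ ℝ ((Fin n → ℝ) × (Fin n → ℝ))

def Lq (n : ℕ) (i : Fin n) : EE n →L[ℝ] ℝ :=
  (ContinuousLinearMap.proj i).comp
      ((ContinuousLinearMap.fst ℝ (Fin n → ℝ) (Fin n → ℝ)).comp
        (ContinuousLinearMap.snd ℝ ℝ ((Fin n → ℝ) × (Fin n → ℝ))))

def P (n : ℕ) : EE n →L[ℝ] (Fin n → ℝ) :=
  (ContinuousLinearMap.snd ℝ (Fin n → ℝ) (Fin n → ℝ)).comp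
    (ContinuousLinearMap.snd ℝ ℝ ((Fin n → ℝ) × (Fin n → ℝ)))

def A (n : ℕ) : (Fin n → ℝ) →L[ℝ] (EE n →L[ℝ] ℝ) :=
  ∑ i, (ContinuousLinearMap.proj i).smulRight (Lq n i)

lemma pcForm_eq (H : EE n → ℝ) (x : EE n) :
    pcForm H x = A n (x.2.2) - H x • L0 n := by
  simp [pcForm, A, L0, Lq, ContinuousLinearMap.sum_apply]

lemma hasFDerivAt_pcForm (H : EE n → ℝ) (hH : Differentiable ℝ H) (x : EE n) :
    HasFDerivAt (pcForm H)
      ((A n).comp (P n) - (fderiv ℝ H x).smulRight (L0 n)) x := by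
  have h1 : HasFDerivAt (fun y : EE n => A n (y.2.2)) ((A n).comp (P n)) x :=
    ((A n).comp (P n)).hasFDerivAt
  have h2 : HasFDerivAt (fun y : EE n => H y • L0 n)
      ((fderiv ℝ H x).smulRight (L0 n)) x := by
    have := (hH x).hasFDerivAt.smul (hasFDerivAt_const (L0 n) x)
    exact this.congr_fderiv (by simp)
  have := h1.sub h2
  have hfun : pcForm H = fun y => A n (y.2.2) - H y • L0 n := funext fun y => pcForm_eq H y
  rw [hfun]
  exact this

end NoetherAux

/-- on an open set `U` where the elementary action `ρ ≠ 0`, the Noether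
symmetry with a given Noether integral is unique: two Noether symmetries with the
same contraction against `α_H` coincide on `U`. -/
theorem noether_symmetry_unique {n : ℕ} (hn : 1 ≤ n)
    (H : EE n → ℝ) (hH : ContDiff ℝ ∞ H)
    (U : Set (EE n)) (hU : IsOpen U)
    (hρ : ∀ x ∈ U, elemAction H x ≠ 0)
    (ζ ζ' : EE n → EE n) (hζ : ContDiffOn ℝ ∞ ζ U) (hζ' : ContDiffOn ℝ ∞ ζ' U)
    (hsym : ∀ x ∈ U, lieDeriv ζ (pcForm H) x = 0)
    (hsym' : ∀ x ∈ U, lieDeriv ζ' (pcForm H) x = 0)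
    (hsame : ∀ x ∈ U, pcForm H x (ζ x) = pcForm H x (ζ' x)) :
    ∀ x ∈ U, ζ x = ζ' x := by
  intro x hx
  have hone : (∞ : WithTop ℕ∞) ≠ 0 := by simp
  have hHd : Differentiable ℝ H := hH.differentiable hone
  have hζd : DifferentiableAt ℝ ζ x :=
    ((hζ.differentiableOn hone) x hx).differentiableAt (hU.mem_nhds hx)
  have hζ'd : DifferentiableAt ℝ ζ' x :=
    ((hζ'.differentiableOn hone) x hx).differentiableAt (hU.mem_nhds hx)
  have hαd := NoetherAux.hasFDerivAt_pcForm H hHd x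
  have hfα : fderiv ℝ (pcForm H) x
      = (NoetherAux.A n).comp (NoetherAux.P n)
        - (fderiv ℝ H x).smulRight (NoetherAux.L0 n) := hαd.fderiv
  -- formula for the second derivative of the form
  have hdα : ∀ u v : EE n, fderiv ℝ (pcForm H) x u v
      = (∑ i, u.2.2 i * v.2.1 i) - fderiv ℝ H x u * v.1 := by
    intro u v
    rw [hfα]
    simp [NoetherAux.A, NoetherAux.P, NoetherAux.L0, NoetherAux.Lq,
      ContinuousLinearMap.sum_apply, smul_eq_mul]
  -- formula for the form itself
  have hα : ∀ y v : EE n, pcForm H y v = (∑ i, y.2.2 i * v.2.1 i) - H y * v.1 := by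
    intro y v
    simp [pcForm, ContinuousLinearMap.sum_apply, smul_eq_mul]
  -- key: interior product of (ζ - ζ') with dα vanishes
  have key : ∀ v : EE n,
      fderiv ℝ (pcForm H) x v (ζ x) - fderiv ℝ (pcForm H) x (ζ x) v
      = fderiv ℝ (pcForm H) x v (ζ' x) - fderiv ℝ (pcForm H) x (ζ' x) v := by
    have hf : HasFDerivAt (fun y => pcForm H y (ζ y))
        ((pcForm H x).comp (fderiv ℝ ζ x) + (fderiv ℝ (pcForm H) x).flip (ζ x)) x := by
      have := hαd.clm_apply hζd.hasFDerivAt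
      rwa [← hfα] at this
    have hf' : HasFDerivAt (fun y => pcForm H y (ζ' y))
        ((pcForm H x).comp (fderiv ℝ ζ' x) + (fderiv ℝ (pcForm H) x).flip (ζ' x)) x := by
      have := hαd.clm_apply hζ'd.hasFDerivAt
      rwa [← hfα] at this
    have heq : fderiv ℝ (fun y => pcForm H y (ζ y)) x
        = fderiv ℝ (fun y => pcForm H y (ζ' y)) x :=
      Filter.EventuallyEq.fderiv_eq
        (Filter.eventuallyEq_of_mem (hU.mem_nhds hx) hsame)
    rw [hf.fderiv, hf'.fderiv] at heq
    intro v
    have hv := ContinuousLinearMap.ext_iff.mp heq v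
    simp only [ContinuousLinearMap.add_apply, ContinuousLinearMap.comp_apply,
      ContinuousLinearMap.flip_apply] at hv
    have hs := ContinuousLinearMap.ext_iff.mp (hsym x hx) v
    simp only [lieDeriv, ContinuousLinearMap.add_apply, ContinuousLinearMap.comp_apply,
      ContinuousLinearMap.zero_apply] at hs
    have hs' := ContinuousLinearMap.ext_iff.mp (hsym' x hx) v
    simp only [lieDeriv, ContinuousLinearMap.add_apply, ContinuousLinearMap.comp_apply,
      ContinuousLinearMap.zero_apply] at hs'
    linarith
  -- component equations
  have hp : ∀ j, (ζ x).2.1 j - fderiv ℝ H x (0, 0, Pi.single j 1) * (ζ x).1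
      = (ζ' x).2.1 j - fderiv ℝ H x (0, 0, Pi.single j 1) * (ζ' x).1 := by
    intro j
    have hk := key ((0 : ℝ), (0 : Fin n → ℝ), Pi.single j 1)
    rw [hdα, hdα, hdα, hdα] at hk
    simp [Pi.single_apply, ite_mul, Finset.sum_ite_eq] at hk
    linarith
  have hq : ∀ j, (ζ x).2.2 j + fderiv ℝ H x (0, Pi.single j 1, 0) * (ζ x).1
      = (ζ' x).2.2 j + fderiv ℝ H x (0, Pi.single j 1, 0) * (ζ' x).1 := by
    intro j
    have hk := key ((0 : ℝ), Pi.single j 1, (0 : Fin n → ℝ))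
    rw [hdα, hdα, hdα, hdα] at hk
    simp [Pi.single_apply, mul_ite, Finset.sum_ite_eq] at hk
    linarith
  -- the time component
  have hd0 : ((ζ x).1 - (ζ' x).1) * elemAction H x = 0 := by
    have hsum : ∑ i, x.2.2 i * (ζ x).2.1 i
        = (∑ i, x.2.2 i * (ζ' x).2.1 i)
          + ((ζ x).1 - (ζ' x).1)
            * ∑ i, x.2.2 i * fderiv ℝ H x (0, 0, Pi.single i 1) := by
      rw [Finset.mul_sum, ← Finset.sum_add_distrib]
      refine Finset.sum_congr rfl fun i _ => ?_
      have h := hp i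
      have : (ζ x).2.1 i
          = (ζ' x).2.1 i + fderiv ℝ H x (0, 0, Pi.single i 1) * ((ζ x).1 - (ζ' x).1) := by
        linarith
      rw [this]; ring
    have hS := hsame x hx
    rw [hα x (ζ x), hα x (ζ' x)] at hS
    unfold elemAction
    linear_combination hS - hsum
  have h1 : (ζ x).1 = (ζ' x).1 := by
    rcases mul_eq_zero.mp hd0 with h | h
    · linarith
    · exact absurd h (hρ x hx)
  have h2 : ∀ j, (ζ x).2.1 j = (ζ' x).2.1 j := by
    intro j; have := hp j; rw [h1] at this; linarith
  have h3 : ∀ j, (ζ x).2.2 j = (ζ' x).2.2 j := by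
    intro j; have := hq j; rw [h1] at this; linarith
  exact Prod.ext h1 (Prod.ext (funext h2) (funext h3))
end
end

section
/- Let H(t,q,p) = ½ Σᵢⱼ gⁱʲ(t,q) pᵢ pⱼ + V(t,q) − c, where for all (t,q) the matrix (gⁱʲ(t,q)) is symmetric positive definite, V is smooth and bounded above by v, and c > v. Then the elementary action ρ(x) = Σⱼ pⱼ ∂H/∂pⱼ(x) − H(x) = ½ Σᵢⱼ gⁱʲ pᵢ pⱼ − V + c is strictly positive at every point of E, and consequently every smooth first integral F of Hamilton's equations for H is a Noether integral: there exists a smooth vector field ζ on all of E with L_ζ α_H = 0 and α_H(x)(ζ(x)) = F(x) for all x ∈ E. -/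
noncomputable section
open scoped ContDiff

/-- The exterior derivative of a 1-form:
`dα(x)(u,v) = (Dα(x)u)(v) − (Dα(x)v)(u)`. -/
def extDeriv1 {n : ℕ} (α : EE n → (EE n →L[ℝ] ℝ)) (x u v : EE n) : ℝ :=
  fderiv ℝ α x u v - fderiv ℝ α x v u

abbrev eT (n : ℕ) : EE n := (1, 0, 0)
abbrev eQ {n : ℕ} (i : Fin n) : EE n := (0, Pi.single i 1, 0)
abbrev eP {n : ℕ} (i : Fin n) : EE n := (0, 0, Pi.single i 1)

lemma vec_decomp {n : ℕ} (v : EE n) :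
    v = v.1 • eT n + (∑ i, v.2.1 i • eQ i) + ∑ i, v.2.2 i • eP i := by
  refine Prod.ext ?_ (Prod.ext ?_ ?_)
  · simp [Prod.fst_sum]
  · funext j
    simp [Prod.fst_sum, Prod.snd_sum, Finset.sum_apply, Pi.single_apply]
  · funext j
    simp [Prod.fst_sum, Prod.snd_sum, Finset.sum_apply, Pi.single_apply]

lemma clm_decomp {n : ℕ} (L : EE n →L[ℝ] ℝ) (v : EE n) :
    L v = v.1 * L (eT n) + (∑ i, v.2.1 i * L (eQ i)) + ∑ i, v.2.2 i * L (eP i) := by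
  conv_lhs => rw [vec_decomp v]
  rw [map_add, map_add, map_sum, map_sum, map_smul]
  simp only [smul_eq_mul]
  congr 1
  · congr 1
    exact Finset.sum_congr rfl fun i _ => by rw [map_smul]; simp
  · exact Finset.sum_congr rfl fun i _ => by rw [map_smul]; simp
lemma contDiff_pd {n : ℕ} {f : EE n → ℝ} (hf : ContDiff ℝ ∞ f) (w : EE n) :
    ContDiff ℝ ∞ (fun x => fderiv ℝ f x w) :=
  (hf.fderiv_right (by simp)).clm_apply contDiff_const

/-- the coordinate CLM `x ↦ x.2.2 i` -/
abbrev ℓP {n : ℕ} (i : Fin n) : EE n →L[ℝ] ℝ :=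
  (ContinuousLinearMap.proj i).comp
    ((ContinuousLinearMap.snd ℝ (Fin n → ℝ) (Fin n → ℝ)).comp
      (ContinuousLinearMap.snd ℝ ℝ ((Fin n → ℝ) × (Fin n → ℝ))))

lemma fderiv_coordP {n : ℕ} (i : Fin n) (x : EE n) :
    fderiv ℝ (fun x : EE n => x.2.2 i) x = ℓP i := by
  rw [show (fun x : EE n => x.2.2 i) = ⇑(ℓP i) from rfl, ContinuousLinearMap.fderiv]

lemma diff_coordP {n : ℕ} (i : Fin n) (x : EE n) :
    DifferentiableAt ℝ (fun x : EE n => x.2.2 i) x := (ℓP i).differentiableAt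

lemma pcForm_apply {n : ℕ} (H : EE n → ℝ) (x : EE n) (u : EE n) :
    pcForm H x u = (∑ i, x.2.2 i * u.2.1 i) - H x * u.1 := by
  simp [pcForm, ContinuousLinearMap.sum_apply]

lemma hasFDerivAt_pcForm {n : ℕ} (H : EE n → ℝ) (hH : ContDiff ℝ ∞ H) (x : EE n) :
    HasFDerivAt (pcForm H)
      ((∑ i, (ℓP i).smulRight ((ContinuousLinearMap.proj i).comp
          ((ContinuousLinearMap.fst ℝ (Fin n → ℝ) (Fin n → ℝ)).comp
            (ContinuousLinearMap.snd ℝ ℝ ((Fin n → ℝ) × (Fin n → ℝ))))))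
        - (fderiv ℝ H x).smulRight (ContinuousLinearMap.fst ℝ ℝ ((Fin n → ℝ) × (Fin n → ℝ)))) x := by
  have h1 : HasFDerivAt (fun y : EE n => ∑ i, y.2.2 i • ((ContinuousLinearMap.proj i).comp
          ((ContinuousLinearMap.fst ℝ (Fin n → ℝ) (Fin n → ℝ)).comp
            (ContinuousLinearMap.snd ℝ ℝ ((Fin n → ℝ) × (Fin n → ℝ))))))
      (∑ i, (ℓP i).smulRight ((ContinuousLinearMap.proj i).comp
          ((ContinuousLinearMap.fst ℝ (Fin n → ℝ) (Fin n → ℝ)).comp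
            (ContinuousLinearMap.snd ℝ ℝ ((Fin n → ℝ) × (Fin n → ℝ)))))) x := by
    refine HasFDerivAt.fun_sum fun i _ => ?_
    exact ((ℓP i).hasFDerivAt).smul_const ((ContinuousLinearMap.proj i).comp
        ((ContinuousLinearMap.fst ℝ (Fin n → ℝ) (Fin n → ℝ)).comp
          (ContinuousLinearMap.snd ℝ ℝ ((Fin n → ℝ) × (Fin n → ℝ)))))
  have h2 : HasFDerivAt (fun y : EE n => H y • ContinuousLinearMap.fst ℝ ℝ ((Fin n → ℝ) × (Fin n → ℝ)))
      ((fderiv ℝ H x).smulRight (ContinuousLinearMap.fst ℝ ℝ ((Fin n → ℝ) × (Fin n → ℝ)))) x :=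
    (hH.differentiable (by simp) x).hasFDerivAt.smul_const (ContinuousLinearMap.fst ℝ ℝ ((Fin n → ℝ) × (Fin n → ℝ)))
  exact h1.sub h2

lemma fderiv_pcForm_apply {n : ℕ} (H : EE n → ℝ) (hH : ContDiff ℝ ∞ H) (x w v : EE n) :
    fderiv ℝ (pcForm H) x w v = (∑ i, w.2.2 i * v.2.1 i) - fderiv ℝ H x w * v.1 := by
  rw [(hasFDerivAt_pcForm H hH x).fderiv]
  simp [ContinuousLinearMap.sum_apply]
theorem key {n : ℕ} (H : EE n → ℝ) (hH : ContDiff ℝ ∞ H)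
    (hρ : ∀ x, elemAction H x ≠ 0)
    (F : EE n → ℝ) (hF : ContDiff ℝ ∞ F)
    (hFI : ∀ x, fderiv ℝ F x (ZH H x) = 0) :
    ∃ ζ : EE n → EE n, ContDiff ℝ ∞ ζ ∧
      (∀ x, lieDeriv ζ (pcForm H) x = 0) ∧ (∀ x, pcForm H x (ζ x) = F x) := by
  have hdiff : ∀ (f : EE n → ℝ), ContDiff ℝ ∞ f → ∀ y, DifferentiableAt ℝ f y :=
    fun f hf y => hf.differentiable (by simp) y
  set Hp : Fin n → EE n → ℝ := fun i x => fderiv ℝ H x (eP i) with hHp_def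
  set Hq : Fin n → EE n → ℝ := fun i x => fderiv ℝ H x (eQ i) with hHq_def
  set Fp : Fin n → EE n → ℝ := fun i x => fderiv ℝ F x (eP i) with hFp_def
  set Fq : Fin n → EE n → ℝ := fun i x => fderiv ℝ F x (eQ i) with hFq_def
  have hHp : ∀ i, ContDiff ℝ ∞ (Hp i) := fun i => contDiff_pd hH _
  have hHq : ∀ i, ContDiff ℝ ∞ (Hq i) := fun i => contDiff_pd hH _
  have hFp : ∀ i, ContDiff ℝ ∞ (Fp i) := fun i => contDiff_pd hF _
  have hFq : ∀ i, ContDiff ℝ ∞ (Fq i) := fun i => contDiff_pd hF _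
  have hρ_eq : ∀ x, elemAction H x = (∑ j, x.2.2 j * Hp j x) - H x := fun x => rfl
  have hρs : ContDiff ℝ ∞ (elemAction H) := by
    have : elemAction H = fun x => (∑ j, x.2.2 j * Hp j x) - H x := rfl
    rw [this]
    exact (ContDiff.sum fun j _ => ((ℓP j).contDiff).mul (hHp j)).sub hH
  set N : EE n → ℝ := fun x => F x - ∑ j, x.2.2 j * Fp j x with hN_def
  have hN : ContDiff ℝ ∞ N :=
    hF.sub (ContDiff.sum fun j _ => ((ℓP j).contDiff).mul (hFp j))
  set a : EE n → ℝ := fun x => N x / elemAction H x with ha_def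
  have ha : ContDiff ℝ ∞ a := hN.div hρs hρ
  have haρ : ∀ y, a y * elemAction H y = N y := fun y => div_mul_cancel₀ _ (hρ y)
  set b : Fin n → EE n → ℝ := fun i x => a x * Hp i x + Fp i x with hb_def
  set cc : Fin n → EE n → ℝ := fun i x => -(a x * Hq i x) - Fq i x with hcc_def
  have hb : ∀ i, ContDiff ℝ ∞ (b i) := fun i => (ha.mul (hHp i)).add (hFp i)
  have hcc : ∀ i, ContDiff ℝ ∞ (cc i) := fun i => ((ha.mul (hHq i)).neg).sub (hFq i)
  set ζ : EE n → EE n := fun y => (a y, fun i => b i y, fun i => cc i y) with hζ_def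
  have hζs : ContDiff ℝ ∞ ζ :=
    ha.prodMk ((contDiff_pi.2 hb).prodMk (contDiff_pi.2 hcc))
  refine ⟨ζ, hζs, ?_, ?_⟩
  · -- Lie derivative vanishes
    intro x
    apply ContinuousLinearMap.ext
    intro v
    simp only [lieDeriv, ContinuousLinearMap.add_apply, ContinuousLinearMap.comp_apply,
      ContinuousLinearMap.zero_apply]
    -- derivative of ζ
    have hprod : fderiv ℝ ζ x v =
        (fderiv ℝ a x v, fun i => fderiv ℝ (b i) x v, fun i => fderiv ℝ (cc i) x v) := by
      have h1 : DifferentiableAt ℝ (fun y => ((fun i => b i y, fun i => cc i y) :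
          (Fin n → ℝ) × (Fin n → ℝ))) x :=
        (((contDiff_pi.2 hb).prodMk (contDiff_pi.2 hcc)).differentiable (by simp)) x
      rw [hζ_def, DifferentiableAt.fderiv_prodMk (hdiff a ha x) h1]
      simp only [ContinuousLinearMap.prod_apply, Prod.mk.injEq, true_and]
      rw [DifferentiableAt.fderiv_prodMk ((contDiff_pi.2 hb).differentiable (by simp) x)
        ((contDiff_pi.2 hcc).differentiable (by simp) x)]
      simp only [ContinuousLinearMap.prod_apply, Prod.mk.injEq]
      constructor
      · rw [fderiv_pi (fun i => hdiff (b i) (hb i) x)]; rfl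
      · rw [fderiv_pi (fun i => hdiff (cc i) (hcc i) x)]; rfl
    rw [fderiv_pcForm_apply H hH, hprod, pcForm_apply]
    -- now a purely scalar goal
    simp only [hζ_def]
    -- expand fderiv (b i)
    have hdb : ∀ i, fderiv ℝ (b i) x v
        = fderiv ℝ a x v * fderiv ℝ H x (eP i) + a x * fderiv ℝ (fun y => fderiv ℝ H y (eP i)) x v
          + fderiv ℝ (fun y => fderiv ℝ F y (eP i)) x v := by
      intro i
      rw [hb_def]
      have h1 : HasFDerivAt (fun y => a y * fderiv ℝ H y (eP i) + fderiv ℝ F y (eP i))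
          ((a x • fderiv ℝ (fun y => fderiv ℝ H y (eP i)) x
            + fderiv ℝ H x (eP i) • fderiv ℝ a x)
            + fderiv ℝ (fun y => fderiv ℝ F y (eP i)) x) x :=
        ((hdiff a ha x).hasFDerivAt.mul (hdiff _ (contDiff_pd hH (eP i)) x).hasFDerivAt).add
          (hdiff _ (contDiff_pd hF (eP i)) x).hasFDerivAt
      rw [h1.fderiv]
      simp only [ContinuousLinearMap.add_apply, ContinuousLinearMap.smul_apply, smul_eq_mul]
      ring
    -- relation for fderiv a
    have hda : ((∑ j, x.2.2 j * fderiv ℝ H x (eP j)) - H x) * fderiv ℝ a x v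
        = fderiv ℝ N x v - a x * fderiv ℝ (elemAction H) x v := by
      have h1 : fderiv ℝ (fun y => a y * elemAction H y) x = fderiv ℝ N x := by
        rw [funext haρ]
      rw [fderiv_fun_mul (hdiff a ha x) (hdiff _ hρs x)] at h1
      have h2 := congrArg (fun L : EE n →L[ℝ] ℝ => L v) h1
      simp only [ContinuousLinearMap.add_apply, ContinuousLinearMap.smul_apply, smul_eq_mul] at h2
      have h3 : elemAction H x = (∑ j, x.2.2 j * fderiv ℝ H x (eP j)) - H x := rfl
      rw [h3] at h2
      linarith
    -- expand fderiv N
    have hdN : fderiv ℝ N x v = fderiv ℝ F x v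
        - ((∑ j, v.2.2 j * fderiv ℝ F x (eP j))
          + ∑ j, x.2.2 j * fderiv ℝ (fun y => fderiv ℝ F y (eP j)) x v) := by
      rw [hN_def]
      have h1 : HasFDerivAt (fun y : EE n => F y - ∑ j, y.2.2 j * fderiv ℝ F y (eP j))
          (fderiv ℝ F x - ∑ j, (x.2.2 j • fderiv ℝ (fun y => fderiv ℝ F y (eP j)) x
            + fderiv ℝ F x (eP j) • (ℓP j))) x := by
        refine HasFDerivAt.sub (hdiff F hF x).hasFDerivAt (HasFDerivAt.fun_sum fun j _ => ?_)
        exact (ℓP j).hasFDerivAt.mul (hdiff _ (contDiff_pd hF (eP j)) x).hasFDerivAt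
      rw [h1.fderiv]
      simp only [ContinuousLinearMap.sub_apply, ContinuousLinearMap.sum_apply,
        ContinuousLinearMap.add_apply, ContinuousLinearMap.smul_apply, smul_eq_mul,
        ContinuousLinearMap.coe_comp', Function.comp_apply, ContinuousLinearMap.coe_snd',
        ContinuousLinearMap.proj_apply]
      rw [← Finset.sum_add_distrib]
      congr 1
      exact Finset.sum_congr rfl fun j _ => by ring
    -- expand fderiv (elemAction H)
    have hdρ : fderiv ℝ (elemAction H) x v
        = ((∑ j, v.2.2 j * fderiv ℝ H x (eP j))
            + ∑ j, x.2.2 j * fderiv ℝ (fun y => fderiv ℝ H y (eP j)) x v)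
          - fderiv ℝ H x v := by
      have h1 : HasFDerivAt (elemAction H)
          ((∑ j, (x.2.2 j • fderiv ℝ (fun y => fderiv ℝ H y (eP j)) x
            + fderiv ℝ H x (eP j) • (ℓP j))) - fderiv ℝ H x) x := by
        refine HasFDerivAt.sub (HasFDerivAt.fun_sum fun j _ => ?_) (hdiff H hH x).hasFDerivAt
        exact (ℓP j).hasFDerivAt.mul (hdiff _ (contDiff_pd hH (eP j)) x).hasFDerivAt
      rw [h1.fderiv]
      simp only [ContinuousLinearMap.sub_apply, ContinuousLinearMap.sum_apply,
        ContinuousLinearMap.add_apply, ContinuousLinearMap.smul_apply, smul_eq_mul,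
        ContinuousLinearMap.coe_comp', Function.comp_apply, ContinuousLinearMap.coe_snd',
        ContinuousLinearMap.proj_apply]
      rw [← Finset.sum_add_distrib]
      congr 1
      exact Finset.sum_congr rfl fun j _ => by ring
    rw [hdN, hdρ] at hda
    -- decompositions of full derivatives
    have hdHv := clm_decomp (fderiv ℝ H x) v
    have hdFv := clm_decomp (fderiv ℝ F x) v
    -- first integral in components
    have hFI' : fderiv ℝ F x (eT n)
        + (∑ i, fderiv ℝ H x (eP i) * fderiv ℝ F x (eQ i))
        - (∑ i, fderiv ℝ H x (eQ i) * fderiv ℝ F x (eP i)) = 0 := by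
      have h1 := clm_decomp (fderiv ℝ F x) (ZH H x)
      rw [hFI x] at h1
      have h2 : ∑ i, (ZH H x).2.1 i * fderiv ℝ F x (eQ i)
          = ∑ i, fderiv ℝ H x (eP i) * fderiv ℝ F x (eQ i) := rfl
      have h3 : ∑ i, (ZH H x).2.2 i * fderiv ℝ F x (eP i)
          = -∑ i, fderiv ℝ H x (eQ i) * fderiv ℝ F x (eP i) := by
        rw [← Finset.sum_neg_distrib]
        refine Finset.sum_congr rfl fun i _ => ?_
        show -fderiv ℝ H x (eQ i) * _ = _
        ring
      rw [h2, h3] at h1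
      have h4 : (ZH H x).1 = 1 := rfl
      rw [h4] at h1
      linarith
    -- decomposition of fderiv H x (ζ x)
    have hdHζ : fderiv ℝ H x ((a x, fun i => b i x, fun i => cc i x) : EE n)
        = a x * fderiv ℝ H x (eT n)
          + (∑ i, fderiv ℝ H x (eQ i) * fderiv ℝ F x (eP i))
          - (∑ i, fderiv ℝ H x (eP i) * fderiv ℝ F x (eQ i)) := by
      have h1 := clm_decomp (fderiv ℝ H x) ((a x, fun i => b i x, fun i => cc i x) : EE n)
      have h2 : ∑ i, ((a x, fun i => b i x, fun i => cc i x) : EE n).2.1 i * fderiv ℝ H x (eQ i)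
          = a x * (∑ i, fderiv ℝ H x (eQ i) * fderiv ℝ H x (eP i))
            + ∑ i, fderiv ℝ H x (eQ i) * fderiv ℝ F x (eP i) := by
        rw [Finset.mul_sum, ← Finset.sum_add_distrib]
        refine Finset.sum_congr rfl fun i _ => ?_
        show b i x * _ = _
        rw [hb_def]; ring
      have h3 : ∑ i, ((a x, fun i => b i x, fun i => cc i x) : EE n).2.2 i * fderiv ℝ H x (eP i)
          = -(a x * (∑ i, fderiv ℝ H x (eQ i) * fderiv ℝ H x (eP i)))
            - ∑ i, fderiv ℝ H x (eP i) * fderiv ℝ F x (eQ i) := by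
        have h4 : ∑ i, ((a x, fun i => b i x, fun i => cc i x) : EE n).2.2 i * fderiv ℝ H x (eP i)
            = ∑ i, (-(a x * (fderiv ℝ H x (eQ i) * fderiv ℝ H x (eP i)))
              - fderiv ℝ H x (eP i) * fderiv ℝ F x (eQ i)) := by
          refine Finset.sum_congr rfl fun i _ => ?_
          show cc i x * _ = _
          rw [hcc_def]; ring
        rw [h4, Finset.sum_sub_distrib, Finset.sum_neg_distrib, Finset.mul_sum]
      rw [h2, h3] at h1
      rw [h1]; ring
    -- convert goal sums
    have g1 : ∑ i, cc i x * v.2.1 i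
        = -(a x * ∑ i, v.2.1 i * fderiv ℝ H x (eQ i)) - ∑ i, v.2.1 i * fderiv ℝ F x (eQ i) := by
      have h4 : ∑ i, cc i x * v.2.1 i
          = ∑ i, (-(a x * (v.2.1 i * fderiv ℝ H x (eQ i))) - v.2.1 i * fderiv ℝ F x (eQ i)) := by
        refine Finset.sum_congr rfl fun i _ => ?_
        rw [hcc_def]; ring
      rw [h4, Finset.sum_sub_distrib, Finset.sum_neg_distrib, Finset.mul_sum]
    have g2 : ∑ i, x.2.2 i * fderiv ℝ (b i) x v
        = fderiv ℝ a x v * (∑ j, x.2.2 j * fderiv ℝ H x (eP j))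
          + a x * (∑ j, x.2.2 j * fderiv ℝ (fun y => fderiv ℝ H y (eP j)) x v)
          + ∑ j, x.2.2 j * fderiv ℝ (fun y => fderiv ℝ F y (eP j)) x v := by
      have h4 : ∑ i, x.2.2 i * fderiv ℝ (b i) x v
          = ∑ i, (fderiv ℝ a x v * (x.2.2 i * fderiv ℝ H x (eP i))
            + a x * (x.2.2 i * fderiv ℝ (fun y => fderiv ℝ H y (eP i)) x v)
            + x.2.2 i * fderiv ℝ (fun y => fderiv ℝ F y (eP i)) x v) := by
        refine Finset.sum_congr rfl fun i _ => ?_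
        rw [hdb i]; ring
      rw [h4, Finset.sum_add_distrib, Finset.sum_add_distrib, Finset.mul_sum, Finset.mul_sum]
    linear_combination g1 + g2 - v.1 * hdHζ + hda + hdFv + (a x) * hdHv + v.1 * hFI'
  · -- pcForm (ζ x) = F x
    intro x
    rw [pcForm_apply]
    have hsum : ∑ i, x.2.2 i * b i x
        = a x * (∑ i, x.2.2 i * Hp i x) + ∑ i, x.2.2 i * Fp i x := by
      rw [Finset.mul_sum, ← Finset.sum_add_distrib]
      exact Finset.sum_congr rfl fun i _ => by rw [hb_def]; ring
    have h1 := haρ x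
    rw [hρ_eq x, hN_def] at h1
    simp only [hζ_def]
    rw [hsum]
    linear_combination h1
abbrev πE {n : ℕ} : EE n →L[ℝ] ℝ × (Fin n → ℝ) :=
  (ContinuousLinearMap.fst ℝ ℝ ((Fin n → ℝ) × (Fin n → ℝ))).prod
    ((ContinuousLinearMap.fst ℝ (Fin n → ℝ) (Fin n → ℝ)).comp
      (ContinuousLinearMap.snd ℝ ℝ ((Fin n → ℝ) × (Fin n → ℝ))))

lemma fderiv_base_eP {n : ℕ} {f : ℝ × (Fin n → ℝ) → ℝ} (hf : ContDiff ℝ ∞ f) (x : EE n)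
    (w : Fin n → ℝ) :
    fderiv ℝ (fun y : EE n => f (y.1, y.2.1)) x ((0 : ℝ), (0 : Fin n → ℝ), w) = 0 := by
  have h1 : (fun y : EE n => f (y.1, y.2.1)) = f ∘ ⇑(πE (n := n)) := rfl
  rw [h1, fderiv_comp x (hf.differentiable (by simp) _) (πE.differentiableAt),
    ContinuousLinearMap.fderiv]
  have h2 : (πE (n := n)) ((0 : ℝ), (0 : Fin n → ℝ), w) = 0 := rfl
  simp [h2]
section explicitH
variable {n : ℕ} (g : ℝ × (Fin n → ℝ) → Matrix (Fin n) (Fin n) ℝ)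
  (V : ℝ × (Fin n → ℝ) → ℝ) (c : ℝ)

lemma Hexp_smooth (hg : ∀ i j, ContDiff ℝ ∞ (fun y => g y i j)) (hV : ContDiff ℝ ∞ V) :
    ContDiff ℝ ∞ (fun x : EE n =>
      (1 / 2) * (∑ i, ∑ j, g (x.1, x.2.1) i j * x.2.2 i * x.2.2 j) + V (x.1, x.2.1) - c) := by
  have hπ : ContDiff ℝ ∞ (fun x : EE n => (x.1, x.2.1)) := (πE (n := n)).contDiff
  have hS : ContDiff ℝ ∞ (fun x : EE n => ∑ i, ∑ j, g (x.1, x.2.1) i j * x.2.2 i * x.2.2 j) := by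
    refine ContDiff.sum fun i _ => ContDiff.sum fun j _ => ?_
    exact (((hg i j).comp hπ).mul ((ℓP i).contDiff)).mul ((ℓP j).contDiff)
  exact ((contDiff_const.mul hS).add (hV.comp hπ)).sub contDiff_const

lemma Hexp_deriv (hg : ∀ i j, ContDiff ℝ ∞ (fun y => g y i j)) (hV : ContDiff ℝ ∞ V)
    (hgsym : ∀ y, (g y).IsSymm) (x : EE n) (k : Fin n) :
    fderiv ℝ (fun x : EE n =>
        (1 / 2) * (∑ i, ∑ j, g (x.1, x.2.1) i j * x.2.2 i * x.2.2 j) + V (x.1, x.2.1) - c) x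
      ((0 : ℝ), (0 : Fin n → ℝ), Pi.single k 1)
    = ∑ j, g (x.1, x.2.1) k j * x.2.2 j := by
  have hπ : ContDiff ℝ ∞ (fun x : EE n => (x.1, x.2.1)) := (πE (n := n)).contDiff
  have hdiff : ∀ (f : EE n → ℝ), ContDiff ℝ ∞ f → DifferentiableAt ℝ f x :=
    fun f hf => hf.differentiable (by simp) x
  have hterm : ∀ i j : Fin n, HasFDerivAt (fun y : EE n => g (y.1, y.2.1) i j * y.2.2 i * y.2.2 j)
      (((g (x.1, x.2.1) i j * x.2.2 i) • ℓP j)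
        + x.2.2 j • ((g (x.1, x.2.1) i j • ℓP i)
          + x.2.2 i • fderiv ℝ (fun y : EE n => g (y.1, y.2.1) i j) x)) x := by
    intro i j
    exact (((hdiff _ ((hg i j).comp hπ)).hasFDerivAt.mul (ℓP i).hasFDerivAt).mul
      (ℓP j).hasFDerivAt)
  have hH' : HasFDerivAt (fun x : EE n =>
      (1 / 2) * (∑ i, ∑ j, g (x.1, x.2.1) i j * x.2.2 i * x.2.2 j) + V (x.1, x.2.1) - c)
      (((1 / 2 : ℝ) • ∑ i, ∑ j, (((g (x.1, x.2.1) i j * x.2.2 i) • ℓP j)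
          + x.2.2 j • ((g (x.1, x.2.1) i j • ℓP i)
            + x.2.2 i • fderiv ℝ (fun y : EE n => g (y.1, y.2.1) i j) x)))
        + fderiv ℝ (fun y : EE n => V (y.1, y.2.1)) x) x := by
    have h1 : HasFDerivAt (fun x : EE n => ∑ i, ∑ j, g (x.1, x.2.1) i j * x.2.2 i * x.2.2 j)
        (∑ i, ∑ j, (((g (x.1, x.2.1) i j * x.2.2 i) • ℓP j)
          + x.2.2 j • ((g (x.1, x.2.1) i j • ℓP i)
            + x.2.2 i • fderiv ℝ (fun y : EE n => g (y.1, y.2.1) i j) x))) x :=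
      HasFDerivAt.fun_sum fun i _ => HasFDerivAt.fun_sum fun j _ => hterm i j
    exact ((h1.const_mul _).add (hdiff _ (hV.comp hπ)).hasFDerivAt).sub_const c
  rw [hH'.fderiv]
  have hg0 : ∀ i j : Fin n,
      fderiv ℝ (fun y : EE n => g (y.1, y.2.1) i j) x ((0 : ℝ), (0 : Fin n → ℝ), Pi.single k 1) = 0 :=
    fun i j => fderiv_base_eP (hg i j) x _
  have hV0 : fderiv ℝ (fun y : EE n => V (y.1, y.2.1)) x ((0 : ℝ), (0 : Fin n → ℝ), Pi.single k 1) = 0 :=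
    fderiv_base_eP hV x _
  simp only [ContinuousLinearMap.add_apply, ContinuousLinearMap.smul_apply,
    ContinuousLinearMap.sum_apply, smul_eq_mul, hV0,
    ContinuousLinearMap.coe_comp', Function.comp_apply, ContinuousLinearMap.coe_snd',
    ContinuousLinearMap.proj_apply]
  rw [add_zero]
  have hsum : ∀ i : Fin n, ∑ j, (g (x.1, x.2.1) i j * x.2.2 i * (Pi.single k 1 : Fin n → ℝ) j
      + x.2.2 j * (g (x.1, x.2.1) i j * (Pi.single k 1 : Fin n → ℝ) i
        + x.2.2 i * fderiv ℝ (fun y : EE n => g (y.1, y.2.1) i j) x ((0 : ℝ), (0 : Fin n → ℝ), Pi.single k 1)))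
      = g (x.1, x.2.1) i k * x.2.2 i
        + (Pi.single k 1 : Fin n → ℝ) i * ∑ j, x.2.2 j * g (x.1, x.2.1) i j := by
    intro i
    simp only [hg0, mul_zero, add_zero]
    rw [Finset.sum_add_distrib]
    congr 1
    · rw [Finset.sum_eq_single k]
      · simp
      · intro j _ hj; simp [Pi.single_apply, Ne.symm hj]
      · intro h; exact absurd (Finset.mem_univ k) h
    · rw [Finset.mul_sum]
      exact Finset.sum_congr rfl fun j _ => by ring
  rw [Finset.sum_congr rfl fun i _ => hsum i]
  have h5 : ∑ i, (g (x.1, x.2.1) i k * x.2.2 i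
      + (Pi.single k 1 : Fin n → ℝ) i * ∑ j, x.2.2 j * g (x.1, x.2.1) i j)
      = (∑ j, g (x.1, x.2.1) k j * x.2.2 j) + ∑ j, g (x.1, x.2.1) k j * x.2.2 j := by
    rw [Finset.sum_add_distrib]
    congr 1
    · exact Finset.sum_congr rfl fun i _ => by rw [(hgsym (x.1, x.2.1)).apply k i]
    · rw [Finset.sum_eq_single k]
      · simp only [Pi.single_eq_same, one_mul]
        exact Finset.sum_congr rfl fun j _ => mul_comm _ _
      · intro j _ hj; simp [Pi.single_apply, Ne.symm hj]
      · intro h; exact absurd (Finset.mem_univ k) h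
  rw [h5]; ring

end explicitH

/-- for a natural mechanical Hamiltonian
`H(t,q,p) = ½ ∑ᵢⱼ gⁱʲ(t,q) pᵢ pⱼ + V(t,q) − c` with `g` symmetric positive definite,
`V ≤ v` and `c > v`, the elementary action equals `½ ∑ᵢⱼ gⁱʲ pᵢ pⱼ − V + c` and is
strictly positive everywhere; consequently every smooth first integral `F` of
Hamilton's equations is a Noether integral, i.e. there is a smooth vector field `ζ`
on all of `E` with `L_ζ α_H = 0` and `α_H(ζ) = F`. -/
theorem natural_system_inverse_noether {n : ℕ} (hn : 1 ≤ n)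
    (g : ℝ × (Fin n → ℝ) → Matrix (Fin n) (Fin n) ℝ)
    (hg : ∀ i j, ContDiff ℝ ∞ (fun y => g y i j))
    (hgsym : ∀ y, (g y).IsSymm) (hgpos : ∀ y, (g y).PosDef)
    (V : ℝ × (Fin n → ℝ) → ℝ) (hV : ContDiff ℝ ∞ V)
    (v c : ℝ) (hVv : ∀ y, V y ≤ v) (hc : v < c)
    (H : EE n → ℝ)
    (hHdef : ∀ x : EE n, H x =
      (1 / 2) * (∑ i, ∑ j, g (x.1, x.2.1) i j * x.2.2 i * x.2.2 j) + V (x.1, x.2.1) - c) :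
    (∀ x : EE n,
      elemAction H x =
        (1 / 2) * (∑ i, ∑ j, g (x.1, x.2.1) i j * x.2.2 i * x.2.2 j) - V (x.1, x.2.1) + c
      ∧ 0 < elemAction H x) ∧
    (∀ F : EE n → ℝ, ContDiff ℝ ∞ F → (∀ x, fderiv ℝ F x (ZH H x) = 0) →
      ∃ ζ : EE n → EE n, ContDiff ℝ ∞ ζ ∧
        (∀ x, lieDeriv ζ (pcForm H) x = 0) ∧ (∀ x, pcForm H x (ζ x) = F x)) := by
  have hHfun : H = fun x : EE n =>
      (1 / 2) * (∑ i, ∑ j, g (x.1, x.2.1) i j * x.2.2 i * x.2.2 j) + V (x.1, x.2.1) - c :=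
    funext hHdef
  subst hHfun
  have hHs := Hexp_smooth g V c hg hV
  have hHd := fun (x : EE n) (k : Fin n) => Hexp_deriv g V c hg hV hgsym x k
  have hEA : ∀ x : EE n, elemAction (fun x : EE n =>
        (1 / 2) * (∑ i, ∑ j, g (x.1, x.2.1) i j * x.2.2 i * x.2.2 j) + V (x.1, x.2.1) - c) x
      = (1 / 2) * (∑ i, ∑ j, g (x.1, x.2.1) i j * x.2.2 i * x.2.2 j) - V (x.1, x.2.1) + c := by
    intro x
    have h0 : elemAction (fun x : EE n =>
        (1 / 2) * (∑ i, ∑ j, g (x.1, x.2.1) i j * x.2.2 i * x.2.2 j) + V (x.1, x.2.1) - c) x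
        = (∑ k, x.2.2 k * fderiv ℝ (fun x : EE n =>
            (1 / 2) * (∑ i, ∑ j, g (x.1, x.2.1) i j * x.2.2 i * x.2.2 j) + V (x.1, x.2.1) - c) x
          ((0 : ℝ), (0 : Fin n → ℝ), Pi.single k 1))
          - ((1 / 2) * (∑ i, ∑ j, g (x.1, x.2.1) i j * x.2.2 i * x.2.2 j) + V (x.1, x.2.1) - c) := rfl
    rw [h0, Finset.sum_congr rfl fun k _ => by rw [hHd x k]]
    have h1 : ∑ k, x.2.2 k * ∑ j, g (x.1, x.2.1) k j * x.2.2 j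
        = ∑ i, ∑ j, g (x.1, x.2.1) i j * x.2.2 i * x.2.2 j := by
      refine Finset.sum_congr rfl fun k _ => ?_
      rw [Finset.mul_sum]
      exact Finset.sum_congr rfl fun j _ => by ring
    rw [h1]; ring
  have hpos : ∀ x : EE n, 0 < elemAction (fun x : EE n =>
      (1 / 2) * (∑ i, ∑ j, g (x.1, x.2.1) i j * x.2.2 i * x.2.2 j) + V (x.1, x.2.1) - c) x := by
    intro x
    rw [hEA x]
    have h1 := ((hgpos (x.1, x.2.1)).posSemidef).dotProduct_mulVec_nonneg x.2.2
    have h2 : dotProduct (star x.2.2) ((g (x.1, x.2.1)).mulVec x.2.2)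
        = ∑ i, ∑ j, g (x.1, x.2.1) i j * x.2.2 i * x.2.2 j := by
      simp only [star_trivial, dotProduct, Matrix.mulVec]
      refine Finset.sum_congr rfl fun i _ => ?_
      rw [Finset.mul_sum]
      exact Finset.sum_congr rfl fun j _ => by ring
    rw [h2] at h1
    have h3 := hVv (x.1, x.2.1)
    linarith
  exact ⟨fun x => ⟨hEA x, hpos x⟩,
    fun F hF hFI => key _ hHs (fun x => (hpos x).ne') F hF hFI⟩
end
end
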